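/- Let W be a |T|×|A| real matrix with W Wᵀ = I and M a |A|×|A| real matrix. Among all upper-triangular |T|×|T| matrices Λ, the value ‖M − Wᵀ Λ W‖²_F is minimized by taking Λ = Up(W M Wᵀ), the upper-triangular part of W M Wᵀ (i.e., Λ_{i,j} = (W M Wᵀ)_{i,j} for i ≤ j and Λ_{i,j} = 0 for i > j). -/
import Mathlib


open Matrix

/-- The upper-triangular part of a matrix. -/
def Up {T : Type*} [LinearOrder T] (X : Matrix T T ℝ) : Matrix T T ℝ :=
  fun i j => if i ≤ j then X i j else 0

private lemma trace_mul_transpose_eq {T : Type*} [Fintype T]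
    (X Y : Matrix T T ℝ) :
    Matrix.trace (X * Yᵀ) = ∑ i, ∑ j, X i j * Y i j := by
  simp [Matrix.trace, Matrix.mul_apply, Matrix.diag]

private lemma expand_lemma {T A : Type*} [Fintype T] [DecidableEq T] [Fintype A]
    (W : Matrix T A ℝ) (hW : W * Wᵀ = 1) (M : Matrix A A ℝ) (L : Matrix T T ℝ) :
    Matrix.trace ((M - Wᵀ * L * W) * (M - Wᵀ * L * W)ᵀ) =
      Matrix.trace (M * Mᵀ) - 2 * Matrix.trace ((W * M * Wᵀ) * Lᵀ)
        + Matrix.trace (L * Lᵀ) := by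
  have hmid : ∀ X : Matrix T A ℝ, W * (Wᵀ * X) = X := fun X => by
    rw [← Matrix.mul_assoc, hW, Matrix.one_mul]
  have h1 : Matrix.trace (M * (Wᵀ * L * W)ᵀ) = Matrix.trace ((W * M * Wᵀ) * Lᵀ) := by
    rw [show (Wᵀ * L * W)ᵀ = Wᵀ * Lᵀ * W from by simp [Matrix.mul_assoc]]
    rw [← Matrix.mul_assoc, ← Matrix.mul_assoc, Matrix.trace_mul_comm]
    simp [Matrix.mul_assoc]
  have h2 : Matrix.trace ((Wᵀ * L * W) * Mᵀ) = Matrix.trace ((W * M * Wᵀ) * Lᵀ) := by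
    rw [← Matrix.trace_transpose ((Wᵀ * L * W) * Mᵀ)]
    rw [Matrix.transpose_mul, Matrix.transpose_transpose]
    exact h1
  have h3 : Matrix.trace ((Wᵀ * L * W) * (Wᵀ * L * W)ᵀ) = Matrix.trace (L * Lᵀ) := by
    simp only [Matrix.transpose_mul, Matrix.transpose_transpose, Matrix.mul_assoc]
    rw [hmid, Matrix.trace_mul_comm Wᵀ]
    simp [Matrix.mul_assoc, hW]
  rw [Matrix.transpose_sub, Matrix.sub_mul, Matrix.mul_sub, Matrix.mul_sub,
    Matrix.trace_sub, Matrix.trace_sub, Matrix.trace_sub, h1, h2, h3]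
  ring

theorem stmt7 {T A : Type*} [Fintype T] [LinearOrder T] [Fintype A]
    (W : Matrix T A ℝ) (hW : W * Wᵀ = 1) (M : Matrix A A ℝ) :
    ∀ Λ : Matrix T T ℝ, (∀ i j, j < i → Λ i j = 0) →
      Matrix.trace ((M - Wᵀ * Up (W * M * Wᵀ) * W) * (M - Wᵀ * Up (W * M * Wᵀ) * W)ᵀ) ≤
        Matrix.trace ((M - Wᵀ * Λ * W) * (M - Wᵀ * Λ * W)ᵀ) := by
  intro Λ hΛ
  set N : Matrix T T ℝ := W * M * Wᵀ with hN
  set U : Matrix T T ℝ := Up N with hU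
  rw [expand_lemma W hW M Λ, expand_lemma W hW M U]
  -- reduce to quadratic inequality
  have hNL : Matrix.trace (N * Λᵀ) = Matrix.trace (U * Λᵀ) := by
    rw [trace_mul_transpose_eq, trace_mul_transpose_eq]
    refine Finset.sum_congr rfl fun i _ => Finset.sum_congr rfl fun j _ => ?_
    rcases le_or_gt i j with h | h
    · simp [hU, Up, h]
    · simp [hΛ i j h]
  have hNU : Matrix.trace (N * Uᵀ) = Matrix.trace (U * Uᵀ) := by
    rw [trace_mul_transpose_eq, trace_mul_transpose_eq]
    refine Finset.sum_congr rfl fun i _ => Finset.sum_congr rfl fun j _ => ?_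
    rcases le_or_gt i j with h | h
    · simp [hU, Up, h]
    · simp [hU, Up, not_le.mpr h]
  have key : (0:ℝ) ≤ Matrix.trace ((Λ - U) * (Λ - U)ᵀ) := by
    rw [trace_mul_transpose_eq]
    refine Finset.sum_nonneg fun i _ => Finset.sum_nonneg fun j _ => ?_
    exact mul_self_nonneg _
  have expand2 : Matrix.trace ((Λ - U) * (Λ - U)ᵀ) =
      Matrix.trace (Λ * Λᵀ) - 2 * Matrix.trace (U * Λᵀ) + Matrix.trace (U * Uᵀ) := by
    have hUL : Matrix.trace (U * Λᵀ) = Matrix.trace (Λ * Uᵀ) := by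
      rw [← Matrix.trace_transpose (U * Λᵀ)]; simp
    rw [Matrix.transpose_sub, Matrix.sub_mul, Matrix.mul_sub, Matrix.mul_sub,
      Matrix.trace_sub, Matrix.trace_sub, Matrix.trace_sub, hUL]
    ring
  rw [expand2] at key
  rw [hNL, hNU]
  linarith
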